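/- Let α, β, s_max be integers such that (a) L ≤ s_max ≤ min{T−2, ⌊(C̄−V̄)/V⌋}, (b) 0 ≤ α < β ≤ s_max, and (c) β = α+1 or s_max ≤ L+α, and let S = [0,α] ∪ [β, s_max] (an interval union of integers). Then for any integer t with s_max+2 ≤ t ≤ T, every (x, y) ∈ P satisfies x_t ≤ C̄·y_t − Σ_{s∈S} (C̄ − V̄ − s·V)·(y_{t−s} − y_{t−s−1}). -/

import Mathlib

/-- Membership in the single-generator unit-commitment set `P`:
`x` is the generation vector, `y` the binary on/off vector, over periods `1,…,T`. -/
def inP (T L Ldn : ℤ) (Cl Cu V Vb : ℝ) (x y : ℤ → ℝ) : Prop :=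
  (∀ t : ℤ, 1 ≤ t → t ≤ T → 0 ≤ x t) ∧
  (∀ t : ℤ, 1 ≤ t → t ≤ T → y t = 0 ∨ y t = 1) ∧
  (∀ t k : ℤ, 2 ≤ t → t ≤ T → t ≤ k → k ≤ min T (t + L - 1) →
    -y (t - 1) + y t - y k ≤ 0) ∧
  (∀ t k : ℤ, 2 ≤ t → t ≤ T → t ≤ k → k ≤ min T (t + Ldn - 1) →
    y (t - 1) - y t + y k ≤ 1) ∧
  (∀ t : ℤ, 1 ≤ t → t ≤ T → Cl * y t ≤ x t) ∧
  (∀ t : ℤ, 1 ≤ t → t ≤ T → x t ≤ Cu * y t) ∧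
  (∀ t : ℤ, 2 ≤ t → t ≤ T → x t - x (t - 1) ≤ V * y (t - 1) + Vb * (1 - y (t - 1))) ∧
  (∀ t : ℤ, 2 ≤ t → t ≤ T → x (t - 1) - x t ≤ V * y t + Vb * (1 - y t))


lemma uc_abel (K V : ℝ) (y : ℤ → ℝ) (t : ℤ) (a b : ℤ) (hab : a ≤ b) :
    ∑ s ∈ Finset.Icc a b, (K - (s : ℝ) * V) * (y (t - s) - y (t - s - 1))
      = (K - (a : ℝ) * V) * y (t - a) - (K - (b : ℝ) * V) * y (t - b - 1)
        - V * ∑ s ∈ Finset.Icc (a + 1) b, y (t - s) := by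
  refine Int.le_induction (motive := fun b _ =>
      ∑ s ∈ Finset.Icc a b, (K - (s : ℝ) * V) * (y (t - s) - y (t - s - 1))
        = (K - (a : ℝ) * V) * y (t - a) - (K - (b : ℝ) * V) * y (t - b - 1)
          - V * ∑ s ∈ Finset.Icc (a + 1) b, y (t - s)) ?_ ?_ b hab
  · beta_reduce
    rw [Finset.Icc_self, Finset.sum_singleton,
      show Finset.Icc (a + 1) a = ∅ from Finset.Icc_eq_empty (by omega), Finset.sum_empty]
    ring
  · intro b hb ih
    beta_reduce
    beta_reduce at ih
    have h1 : Finset.Icc a (b + 1) = insert (b + 1) (Finset.Icc a b) := by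
      ext s; simp only [Finset.mem_Icc, Finset.mem_insert]; omega
    have h2 : Finset.Icc (a + 1) (b + 1) = insert (b + 1) (Finset.Icc (a + 1) b) := by
      ext s; simp only [Finset.mem_Icc, Finset.mem_insert]; omega
    have hnm : (b + 1) ∉ Finset.Icc a b := by simp [Finset.mem_Icc]
    have hnm2 : (b + 1) ∉ Finset.Icc (a + 1) b := by simp [Finset.mem_Icc]
    rw [h1, Finset.sum_insert hnm, h2, Finset.sum_insert hnm2, ih,
      show t - (b + 1) = t - b - 1 from by ring]
    push_cast
    ring

lemma uc_sum_ones (y : ℤ → ℝ) (t u v : ℤ) (huv : u ≤ v + 1)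
    (h1 : ∀ s, u ≤ s → s ≤ v → y (t - s) = 1) :
    ∑ s ∈ Finset.Icc u v, y (t - s) = (v : ℝ) + 1 - u := by
  rw [Finset.sum_congr rfl fun s hs =>
      h1 s (Finset.mem_Icc.mp hs).1 (Finset.mem_Icc.mp hs).2,
    Finset.sum_const, Int.card_Icc, nsmul_eq_mul, mul_one]
  have hc : ((v + 1 - u).toNat : ℝ) = (v : ℝ) + 1 - u := by
    rw [show ((v + 1 - u).toNat : ℝ) = (((v + 1 - u).toNat : ℤ) : ℝ) from by push_cast; ring,
      Int.toNat_of_nonneg (by omega)]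
    push_cast; ring
  rw [hc]

lemma uc_sum_mono (y : ℤ → ℝ) (t a b u v : ℤ) (hau : a ≤ u) (hvb : v ≤ b)
    (hnn : ∀ s, a ≤ s → s ≤ b → 0 ≤ y (t - s)) :
    (∑ s ∈ Finset.Icc u v, y (t - s)) ≤ ∑ s ∈ Finset.Icc a b, y (t - s) :=
  Finset.sum_le_sum_of_subset_of_nonneg (Finset.Icc_subset_Icc hau hvb)
    (fun s hs _ => by rw [Finset.mem_Icc] at hs; exact hnn s hs.1 hs.2)

lemma uc_sum_split (y : ℤ → ℝ) (t a c b : ℤ) (h1 : a ≤ c + 1) (h2 : c ≤ b) :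
    ∑ s ∈ Finset.Icc a b, y (t - s)
      = (∑ s ∈ Finset.Icc a c, y (t - s)) + ∑ s ∈ Finset.Icc (c + 1) b, y (t - s) := by
  rw [← Finset.sum_union (by
    rw [Finset.disjoint_left]; intro s hs hs'
    rw [Finset.mem_Icc] at hs hs'; omega)]
  congr 1
  ext s; simp only [Finset.mem_Icc, Finset.mem_union]; omega


lemma uc_run (T L : ℤ) (y : ℤ → ℝ)
    (hup : ∀ τ k : ℤ, 2 ≤ τ → τ ≤ T → τ ≤ k → k ≤ min T (τ + L - 1) →
      -y (τ - 1) + y τ - y k ≤ 0)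
    (hbin : ∀ u : ℤ, 1 ≤ u → u ≤ T → y u = 0 ∨ y u = 1)
    (t m j β : ℤ) (htm : m + 2 ≤ t) (htT : t ≤ T) (hβm : β ≤ m)
    (hj : 0 ≤ j) (hjβ : j < β)
    (hz : y (t - j) = 0) (hone : ∀ s, j + 1 ≤ s → s ≤ β → y (t - s) = 1) :
    ∀ s, j + 1 ≤ s → s ≤ min (j + L) (m + 1) → y (t - s) = 1 := by
  intro s hs1 hs2
  by_cases hne : ((Finset.Icc (j + 1) (m + 1)).filter (fun s => y (t - s) = 0)).Nonempty
  · have hpm := Finset.min'_mem _ hne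
    set p := Finset.min' _ hne with hp
    simp only [Finset.mem_filter, Finset.mem_Icc] at hpm
    have hpmin : ∀ q ∈ (Finset.Icc (j + 1) (m + 1)).filter (fun s => y (t - s) = 0),
        p ≤ q := fun q hq => Finset.min'_le _ q hq
    have hpβ : β < p := by
      by_contra h
      push_neg at h
      have h1 := hone p (by omega) h
      rw [hpm.2] at h1; norm_num at h1
    have hkey : j + L < p := by
      by_contra h
      push_neg at h
      have h2 := hup (t - p + 1) (t - j) (by omega) (by omega) (by omega) (by omega)
      rw [show t - p + 1 - 1 = t - p from by ring] at h2
      have hyp1 : y (t - p + 1) = 1 := by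
        have hx : y (t - (p - 1)) = 1 := by
          rcases hbin (t - (p - 1)) (by omega) (by omega) with h0 | h1
          · exfalso
            have hm : (p - 1) ∈ (Finset.Icc (j + 1) (m + 1)).filter
                (fun s => y (t - s) = 0) :=
              Finset.mem_filter.mpr ⟨Finset.mem_Icc.mpr ⟨by omega, by omega⟩, h0⟩
            have := hpmin _ hm; omega
          · exact h1
        rwa [show t - (p - 1) = t - p + 1 from by ring] at hx
      rw [hyp1, hpm.2, hz] at h2
      norm_num at h2
    rcases hbin (t - s) (by omega) (by omega) with h0 | h1
    · exfalso
      have hsZ : s ∈ (Finset.Icc (j + 1) (m + 1)).filter (fun s => y (t - s) = 0) :=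
        Finset.mem_filter.mpr ⟨Finset.mem_Icc.mpr ⟨by omega, by omega⟩, h0⟩
      have := hpmin s hsZ; omega
    · exact h1
  · rcases hbin (t - s) (by omega) (by omega) with h0 | h1
    · exact absurd ⟨s, Finset.mem_filter.mpr
        ⟨Finset.mem_Icc.mpr ⟨hs1, by omega⟩, h0⟩⟩ hne
    · exact h1

lemma uc_gap (T L : ℤ) (y : ℤ → ℝ)
    (hup : ∀ τ k : ℤ, 2 ≤ τ → τ ≤ T → τ ≤ k → k ≤ min T (τ + L - 1) →
      -y (τ - 1) + y τ - y k ≤ 0)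
    (hbin : ∀ u : ℤ, 1 ≤ u → u ≤ T → y u = 0 ∨ y u = 1)
    (t m β : ℤ) (htm : m + 2 ≤ t) (htT : t ≤ T) (hβm : β ≤ m)
    (hQ : y (t - β) = 1) (z : ℤ) (hz0 : 0 ≤ z) (hzβ : z ≤ β - 1) (hzy : y (t - z) = 0) :
    ∃ j, z ≤ j ∧ j ≤ β - 1 ∧ (∀ s, j + 1 ≤ s → s ≤ β → y (t - s) = 1) ∧
      (∀ s, j + 1 ≤ s → s ≤ min (j + L) (m + 1) → y (t - s) = 1) := by
  have hzF : z ∈ (Finset.Icc 0 (β - 1)).filter (fun s => y (t - s) = 0) :=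
    Finset.mem_filter.mpr ⟨Finset.mem_Icc.mpr ⟨hz0, hzβ⟩, hzy⟩
  have hne : ((Finset.Icc 0 (β - 1)).filter (fun s => y (t - s) = 0)).Nonempty := ⟨z, hzF⟩
  have hjm := Finset.max'_mem _ hne
  set j := Finset.max' _ hne with hj
  simp only [Finset.mem_filter, Finset.mem_Icc] at hjm
  have hjmax : ∀ q ∈ (Finset.Icc 0 (β - 1)).filter (fun s => y (t - s) = 0), q ≤ j :=
    fun q hq => Finset.le_max' _ q hq
  have hzj : z ≤ j := hjmax z hzF
  have honeβ : ∀ s, j + 1 ≤ s → s ≤ β → y (t - s) = 1 := by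
    intro s h1 h2
    rcases eq_or_lt_of_le h2 with h | h2'
    · rw [h]; exact hQ
    · rcases hbin (t - s) (by omega) (by omega) with h0 | h1'
      · exfalso
        have hm : s ∈ (Finset.Icc 0 (β - 1)).filter (fun s => y (t - s) = 0) :=
          Finset.mem_filter.mpr ⟨Finset.mem_Icc.mpr ⟨by omega, by omega⟩, h0⟩
        have := hjmax s hm; omega
      · exact h1'
  exact ⟨j, hzj, hjm.1.2, honeβ,
    uc_run T L y hup hbin t m j β htm htT hβm (by omega) (by omega) hjm.2 honeβ⟩

lemma uc_ramp (T : ℤ) (Cu V Vb : ℝ) (x y : ℤ → ℝ)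
    (hcuB : ∀ u : ℤ, 1 ≤ u → u ≤ T → x u ≤ Cu * y u)
    (hru : ∀ u : ℤ, 2 ≤ u → u ≤ T → x u - x (u - 1) ≤ V * y (u - 1) + Vb * (1 - y (u - 1)))
    (t r : ℤ) (hr0 : 0 ≤ r) (h2 : 2 ≤ t - r) (htT : t ≤ T)
    (hz : y (t - r - 1) = 0) (hone : ∀ s, 0 ≤ s → s ≤ r → y (t - s) = 1) :
    x t ≤ Vb + (r : ℝ) * V := by
  have base : x (t - r) ≤ Vb := by
    have h1 := hru (t - r) h2 (by omega)
    have h3 := hcuB (t - r - 1) (by omega) (by omega)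
    rw [hz] at h1 h3
    linarith
  have main : ∀ u : ℤ, t - r ≤ u → u ≤ t → x u ≤ Vb + ((u - (t - r) : ℤ) : ℝ) * V := by
    intro u hu1
    refine Int.le_induction (motive := fun u _ => u ≤ t → x u ≤ Vb + ((u - (t - r) : ℤ) : ℝ) * V)
      ?_ ?_ u hu1
    · intro _; simpa using base
    · intro u hu ih
      beta_reduce
      intro hut
      have ihh := ih (by omega)
      have hstep := hru (u + 1) (by omega) (by omega)
      rw [show u + 1 - 1 = u from by ring] at hstep
      have hyu : y u = 1 := by
        have hh := hone (t - u) (by omega) (by omega)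
        rwa [show t - (t - u) = u from by ring] at hh
      rw [hyu] at hstep
      have hcst : ((u + 1 - (t - r) : ℤ) : ℝ) = ((u - (t - r) : ℤ) : ℝ) + 1 := by
        push_cast; ring
      rw [hcst]
      linarith
  have hfin := main t (by omega) le_rfl
  rw [show t - (t - r) = r from by ring] at hfin
  exact hfin

set_option maxHeartbeats 1000000 in
theorem stmt_8 (T L Ldn : ℤ) (Cl Cu V Vb : ℝ)
    (hT : 1 ≤ T) (hL : 1 ≤ L) (hLdn : 1 ≤ Ldn)
    (hCl : 0 < Cl) (hCu : Cl < Cu) (hV : 0 < V)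
    (hVVb : Vb + V ≤ Cu) (hVb1 : Cl < Vb) (hVb2 : Vb < Cl + V)
    (α β smax : ℤ) (hs1 : L ≤ smax) (hs2 : smax ≤ min (T - 2) ⌊(Cu - Vb) / V⌋)
    (hα : 0 ≤ α) (hαβ : α < β) (hβ : β ≤ smax)
    (hc : β = α + 1 ∨ smax ≤ L + α)
    (t : ℤ) (ht1 : smax + 2 ≤ t) (ht2 : t ≤ T)
    (x y : ℤ → ℝ) (hxy : inP T L Ldn Cl Cu V Vb x y) :
    x t ≤ Cu * y t - ∑ s ∈ Finset.Icc 0 α ∪ Finset.Icc β smax,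
      (Cu - Vb - (s : ℝ) * V) * (y (t - s) - y (t - s - 1)) := by
  obtain ⟨hx0, hy, hup, hdn, hclB, hcuB, hru, hrd⟩ := hxy
  have hsT : smax ≤ T - 2 := le_trans hs2 (min_le_left _ _)
  have hsf : smax ≤ ⌊(Cu - Vb) / V⌋ := le_trans hs2 (min_le_right _ _)
  have hfl : (smax : ℝ) * V ≤ Cu - Vb := by
    have h1 : (smax : ℝ) ≤ (Cu - Vb) / V := Int.le_floor.mp hsf
    rw [le_div_iff₀ hV] at h1
    exact h1
  have hyw : ∀ s : ℤ, 0 ≤ s → s ≤ smax + 1 → y (t - s) = 0 ∨ y (t - s) = 1 :=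
    fun s h1 h2 => hy _ (by omega) (by omega)
  have hynn : ∀ s : ℤ, 0 ≤ s → s ≤ smax + 1 → 0 ≤ y (t - s) := by
    intro s h1 h2; rcases hyw s h1 h2 with h | h <;> rw [h] <;> norm_num
  set A := ∑ s ∈ Finset.Icc 1 α, y (t - s) with hA
  set B := ∑ s ∈ Finset.Icc (β + 1) smax, y (t - s) with hB
  have hA0 : 0 ≤ A := Finset.sum_nonneg fun s hs => by
    rw [Finset.mem_Icc] at hs; exact hynn s (by omega) (by omega)
  have hB0 : 0 ≤ B := Finset.sum_nonneg fun s hs => by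
    rw [Finset.mem_Icc] at hs; exact hynn s (by omega) (by omega)
  have hsum : ∑ s ∈ Finset.Icc 0 α ∪ Finset.Icc β smax,
      (Cu - Vb - (s : ℝ) * V) * (y (t - s) - y (t - s - 1))
      = (Cu - Vb) * y t - (Cu - Vb - (α : ℝ) * V) * y (t - α - 1) - V * A
        + ((Cu - Vb - (β : ℝ) * V) * y (t - β)
          - (Cu - Vb - (smax : ℝ) * V) * y (t - smax - 1) - V * B) := by
    have hd : Disjoint (Finset.Icc 0 α) (Finset.Icc β smax) := by
      rw [Finset.disjoint_left]; intro s hs hs'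
      rw [Finset.mem_Icc] at hs hs'; omega
    rw [Finset.sum_union hd, uc_abel (Cu - Vb) V y t 0 α hα,
      uc_abel (Cu - Vb) V y t β smax hβ, hA, hB]
    simp only [Int.cast_zero, zero_mul, sub_zero, zero_add]
  have hcastα : (α : ℝ) ≤ (smax : ℝ) := by exact_mod_cast (by omega : α ≤ smax)
  have hcastβ : (β : ℝ) ≤ (smax : ℝ) := by exact_mod_cast hβ
  have hcα0 : 0 ≤ Cu - Vb - (α : ℝ) * V := by
    nlinarith [mul_le_mul_of_nonneg_right hcastα hV.le]
  have hcβ0 : 0 ≤ Cu - Vb - (β : ℝ) * V := by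
    nlinarith [mul_le_mul_of_nonneg_right hcastβ hV.le]
  have hcm0 : 0 ≤ Cu - Vb - (smax : ℝ) * V := by linarith
  have hP1nn : 0 ≤ y (t - α - 1) := by
    have hh := hynn (α + 1) (by omega) (by omega)
    rwa [show t - (α + 1) = t - α - 1 from by ring] at hh
  have hRnn : 0 ≤ y (t - smax - 1) := by
    have hh := hynn (smax + 1) (by omega) (by omega)
    rwa [show t - (smax + 1) = t - smax - 1 from by ring] at hh
  suffices key : x t ≤ Vb * y t + (Cu - Vb - (α : ℝ) * V) * y (t - α - 1)
      - (Cu - Vb - (β : ℝ) * V) * y (t - β)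
      + (Cu - Vb - (smax : ℝ) * V) * y (t - smax - 1) + V * A + V * B by
    rw [hsum]; linarith
  have h2R : 0 ≤ (Cu - Vb - (smax : ℝ) * V) * y (t - smax - 1) := mul_nonneg hcm0 hRnn
  have h1P : 0 ≤ (Cu - Vb - (α : ℝ) * V) * y (t - α - 1) := mul_nonneg hcα0 hP1nn
  have h3A : 0 ≤ V * A := mul_nonneg hV.le hA0
  have h4B : 0 ≤ V * B := mul_nonneg hV.le hB0
  rcases hy t (by omega) ht2 with hyt | hyt
  · -- y t = 0
    have hxt : x t ≤ 0 := by
      have hh := hcuB t (by omega) ht2; rw [hyt] at hh; linarith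
    rcases hyw β (by omega) (by omega) with hQ | hQ
    · rw [hyt, hQ]
      linarith
    · obtain ⟨j, hj0, hjβ1, honeβ, hrun⟩ := uc_gap T L y hup hy t smax β (by omega) ht2 hβ
        hQ 0 le_rfl (by omega) (by rwa [sub_zero])
      rcases le_or_gt j α with hjα | hjα
      · have hP1 : y (t - α - 1) = 1 := by
          have hh := honeβ (α + 1) (by omega) (by omega)
          rwa [show t - (α + 1) = t - α - 1 from by ring] at hh
        have hAlb : (α : ℝ) - (j : ℝ) ≤ A := by
          have hones := uc_sum_ones y t (j + 1) α (by omega)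
            (fun s h1 h2 => honeβ s h1 (by omega))
          have hmono := uc_sum_mono y t 1 α (j + 1) α (by omega) le_rfl
            (fun s h1 h2 => hynn s (by omega) (by omega))
          rw [hA]; push_cast at hones; linarith
        rw [hyt, hQ, hP1]
        have h5 : V * ((α : ℝ) - (j : ℝ)) ≤ V * A := mul_le_mul_of_nonneg_left hAlb hV.le
        have h6 : 0 ≤ ((β : ℝ) - (j : ℝ)) * V := by
          have : (j : ℝ) ≤ (β : ℝ) := by exact_mod_cast (by omega : j ≤ β)
          nlinarith
        linarith
      · have hsm : smax ≤ L + α := hc.resolve_left (by omega)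
        have hcov : ∀ s, j + 1 ≤ s → s ≤ smax + 1 → y (t - s) = 1 :=
          fun s h1 h2 => hrun s h1 (by omega)
        have hR : y (t - smax - 1) = 1 := by
          have hh := hcov (smax + 1) (by omega) le_rfl
          rwa [show t - (smax + 1) = t - smax - 1 from by ring] at hh
        have hBval : B = (smax : ℝ) - (β : ℝ) := by
          rw [hB, uc_sum_ones y t (β + 1) smax (by omega)
            (fun s h1 h2 => hcov s (by omega) (by omega))]
          push_cast; ring
        rw [hyt, hQ, hR, hBval]
        linarith
  · -- y t = 1
    have hxtCu : x t ≤ Cu := by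
      have hh := hcuB t (by omega) ht2; rw [hyt] at hh; linarith
    by_cases hne : (((Finset.Icc 0 smax).filter (fun s => y (t - s - 1) = 0))).Nonempty
    · have hrm := Finset.min'_mem _ hne
      set r := Finset.min' _ hne with hr
      simp only [Finset.mem_filter, Finset.mem_Icc] at hrm
      have hrmin : ∀ q ∈ (Finset.Icc 0 smax).filter (fun s => y (t - s - 1) = 0), r ≤ q :=
        fun q hq => Finset.min'_le _ q hq
      have hones : ∀ s, 0 ≤ s → s ≤ r → y (t - s) = 1 := by
        intro s h1 h2
        rcases eq_or_lt_of_le h1 with h | h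
        · rw [← h, sub_zero]; exact hyt
        · rcases hyw s (by omega) (by omega) with h0 | h1'
          · exfalso
            have hm : s - 1 ∈ (Finset.Icc 0 smax).filter (fun s => y (t - s - 1) = 0) :=
              Finset.mem_filter.mpr ⟨Finset.mem_Icc.mpr ⟨by omega, by omega⟩,
                by rwa [show t - (s - 1) - 1 = t - s from by ring]⟩
            have := hrmin _ hm; omega
          · exact h1'
      have hxt : x t ≤ Vb + (r : ℝ) * V :=
        uc_ramp T Cu V Vb x y hcuB hru t r (by omega) (by omega) ht2 hrm.2 hones
      rcases hyw β (by omega) (by omega) with hQ | hQ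
      · -- y (t - β) = 0
        have hrβ : r < β := by
          by_contra h
          push_neg at h
          have hh := hones β (by omega) h
          rw [hQ] at hh; norm_num at hh
        rcases le_or_gt r α with hrα | hrα
        · have hAlb : (r : ℝ) ≤ A := by
            have hones1 := uc_sum_ones y t 1 r (by omega)
              (fun s h1 h2 => hones s (by omega) h2)
            have hmono := uc_sum_mono y t 1 α 1 r le_rfl hrα
              (fun s h1 h2 => hynn s (by omega) (by omega))
            rw [hA]; push_cast at hones1; linarith
          rw [hyt, hQ]
          have h5 : V * (r : ℝ) ≤ V * A := mul_le_mul_of_nonneg_left hAlb hV.le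
          linarith
        · have hP1 : y (t - α - 1) = 1 := by
            have hh := hones (α + 1) (by omega) (by omega)
            rwa [show t - (α + 1) = t - α - 1 from by ring] at hh
          have hAval : A = (α : ℝ) := by
            rw [hA, uc_sum_ones y t 1 α (by omega)
              (fun s h1 h2 => hones s (by omega) (by omega))]
            push_cast; ring
          rw [hyt, hQ, hP1, hAval]
          linarith
      · -- y (t - β) = 1
        rcases le_or_gt β r with hβr | hβr
        · have hP1 : y (t - α - 1) = 1 := by
            have hh := hones (α + 1) (by omega) (by omega)
            rwa [show t - (α + 1) = t - α - 1 from by ring] at hh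
          have hAval : A = (α : ℝ) := by
            rw [hA, uc_sum_ones y t 1 α (by omega)
              (fun s h1 h2 => hones s (by omega) (by omega))]
            push_cast; ring
          have hBlb : (r : ℝ) - (β : ℝ) ≤ B := by
            have hones1 := uc_sum_ones y t (β + 1) r (by omega)
              (fun s h1 h2 => hones s (by omega) h2)
            have hmono := uc_sum_mono y t (β + 1) smax (β + 1) r le_rfl hrm.1.2
              (fun s h1 h2 => hynn s (by omega) (by omega))
            rw [hB]; push_cast at hones1; linarith
          rw [hyt, hQ, hP1, hAval]
          have h5 : V * ((r : ℝ) - (β : ℝ)) ≤ V * B := mul_le_mul_of_nonneg_left hBlb hV.le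
          linarith
        · -- r < β
          have hrβ1 : r + 1 ≤ β - 1 := by
            by_contra h
            push_neg at h
            have hβr1 : β = r + 1 := by omega
            rw [hβr1, show t - (r + 1) = t - r - 1 from by ring, hrm.2] at hQ
            norm_num at hQ
          obtain ⟨j, hjr, hjβ1, honeβ, hrun⟩ := uc_gap T L y hup hy t smax β (by omega)
            ht2 hβ hQ (r + 1) (by omega) hrβ1
            (by rw [show t - (r + 1) = t - r - 1 from by ring]; exact hrm.2)
          rcases le_or_gt j α with hjα | hjα
          · have hP1 : y (t - α - 1) = 1 := by
              have hh := honeβ (α + 1) (by omega) (by omega)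
              rwa [show t - (α + 1) = t - α - 1 from by ring] at hh
            have hsplit := uc_sum_split y t 1 j α (by omega) (by omega)
            have hlb1 : (r : ℝ) ≤ ∑ s ∈ Finset.Icc 1 j, y (t - s) := by
              have hones1 := uc_sum_ones y t 1 r (by omega)
                (fun s h1 h2 => hones s (by omega) h2)
              have hmono := uc_sum_mono y t 1 j 1 r le_rfl (by omega)
                (fun s h1 h2 => hynn s (by omega) (by omega))
              push_cast at hones1; linarith
            have hlb2 : (α : ℝ) - (j : ℝ) = ∑ s ∈ Finset.Icc (j + 1) α, y (t - s) := by
              rw [uc_sum_ones y t (j + 1) α (by omega)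
                (fun s h1 h2 => honeβ s h1 (by omega))]
              push_cast; ring
            have hAlb : (r : ℝ) + ((α : ℝ) - (j : ℝ)) ≤ A := by
              rw [hA, hsplit]; linarith
            rw [hyt, hQ, hP1]
            have h5 : V * ((r : ℝ) + ((α : ℝ) - (j : ℝ))) ≤ V * A :=
              mul_le_mul_of_nonneg_left hAlb hV.le
            have h6 : 0 ≤ ((β : ℝ) - (j : ℝ)) * V := by
              have : (j : ℝ) ≤ (β : ℝ) := by exact_mod_cast (by omega : j ≤ β)
              nlinarith
            linarith
          · have hsm : smax ≤ L + α := hc.resolve_left (by omega)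
            have hcov : ∀ s, j + 1 ≤ s → s ≤ smax + 1 → y (t - s) = 1 :=
              fun s h1 h2 => hrun s h1 (by omega)
            have hR : y (t - smax - 1) = 1 := by
              have hh := hcov (smax + 1) (by omega) le_rfl
              rwa [show t - (smax + 1) = t - smax - 1 from by ring] at hh
            have hBval : B = (smax : ℝ) - (β : ℝ) := by
              rw [hB, uc_sum_ones y t (β + 1) smax (by omega)
                (fun s h1 h2 => hcov s (by omega) (by omega))]
              push_cast; ring
            rcases le_or_gt r α with hrα | hrα
            · have hAlb : (r : ℝ) ≤ A := by
                have hones1 := uc_sum_ones y t 1 r (by omega)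
                  (fun s h1 h2 => hones s (by omega) h2)
                have hmono := uc_sum_mono y t 1 α 1 r le_rfl hrα
                  (fun s h1 h2 => hynn s (by omega) (by omega))
                rw [hA]; push_cast at hones1; linarith
              rw [hyt, hQ, hR, hBval]
              have h5 : V * (r : ℝ) ≤ V * A := mul_le_mul_of_nonneg_left hAlb hV.le
              linarith
            · have hP1 : y (t - α - 1) = 1 := by
                have hh := hones (α + 1) (by omega) (by omega)
                rwa [show t - (α + 1) = t - α - 1 from by ring] at hh
              have hAval : A = (α : ℝ) := by
                rw [hA, uc_sum_ones y t 1 α (by omega)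
                  (fun s h1 h2 => hones s (by omega) (by omega))]
                push_cast; ring
              rw [hyt, hQ, hP1, hR, hBval, hAval]
              linarith
    · -- no switch-off in window: everything on
      have hall : ∀ s, 0 ≤ s → s ≤ smax + 1 → y (t - s) = 1 := by
        intro s h1 h2
        rcases eq_or_lt_of_le h1 with h | h
        · rw [← h, sub_zero]; exact hyt
        · rcases hyw s (by omega) h2 with h0 | h1'
          · exact absurd ⟨s - 1, Finset.mem_filter.mpr
              ⟨Finset.mem_Icc.mpr ⟨by omega, by omega⟩,
                by rwa [show t - (s - 1) - 1 = t - s from by ring]⟩⟩ hne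
          · exact h1'
      have hP1 : y (t - α - 1) = 1 := by
        have hh := hall (α + 1) (by omega) (by omega)
        rwa [show t - (α + 1) = t - α - 1 from by ring] at hh
      have hR : y (t - smax - 1) = 1 := by
        have hh := hall (smax + 1) (by omega) (by omega)
        rwa [show t - (smax + 1) = t - smax - 1 from by ring] at hh
      have hQ : y (t - β) = 1 := hall β (by omega) (by omega)
      have hAval : A = (α : ℝ) := by
        rw [hA, uc_sum_ones y t 1 α (by omega)
          (fun s h1 h2 => hall s (by omega) (by omega))]
        push_cast; ring
      have hBval : B = (smax : ℝ) - (β : ℝ) := by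
        rw [hB, uc_sum_ones y t (β + 1) smax (by omega)
          (fun s h1 h2 => hall s (by omega) (by omega))]
        push_cast; ring
      rw [hyt, hP1, hQ, hR, hAval, hBval]
      linarith
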